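/- arXiv:2602.05346 — 4 statements merged into one kernel-verified Lean document; each statement's English description precedes it below -/
import Mathlib

section
/- Let N = 2u + f_safe + 1. A commit quorum of size ⌊N/2⌋ + 1 and a view-change quorum of size N - u intersect in at least ⌊(f_safe + 1)/2⌋ + 1 nodes. -/
/-- With `N = 2u + f_safe + 1`, a commit quorum of size `⌊N/2⌋ + 1` and a view-change
quorum of size `N - u` intersect in at least `⌊(f_safe + 1)/2⌋ + 1` nodes. -/
theorem commit_viewchange_intersection
    (N u f_safe : ℕ) (hN : N = 2 * u + f_safe + 1)
    (Qc Qv : Finset (Fin N))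
    (hQc : Qc.card = N / 2 + 1) (hQv : Qv.card = N - u) :
    (Qc ∩ Qv).card ≥ (f_safe + 1) / 2 + 1 := by
  have hu : (Qc ∪ Qv).card ≤ N := by
    simpa using (Qc ∪ Qv).card_le_univ
  have h := Finset.card_inter_add_card_union Qc Qv
  omega
end

section
/- Under the fast-path condition N - u > 2·f_safe, if two conflicting batches each received votes from at least N - u - f_safe distinct nodes, and a fast quorum of all N nodes voted for one of them, then some correct node voted for both batches (a contradiction with correct-node behavior); hence at most one of two conflicting batches each appearing ≥ N - u - f_safe times can have been fast-path audited. -/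
/-- Under the fast-path condition `N - u > 2·f_safe`, if all `N` nodes voted for a
batch `A` and a set `S` of at least `N - u - f_safe` nodes voted for a conflicting
batch, then some correct node voted for both; since correct nodes never vote for two
conflicting batches in the same view, at most one of the two batches can have been
fast-path audited. -/
theorem fast_path_no_conflicting_audit
    {β : Type} (N u f_safe : ℕ) (hN : N ≥ 2 * u + f_safe + 1)
    (hfast : N - u > 2 * f_safe)
    (B : Finset (Fin N)) (hB : B.card ≤ f_safe)
    (conflicting : β → β → Prop) (voted : Fin N → β → Prop)
    (hcorrect : ∀ n, n ∉ B → ∀ b1 b2, conflicting b1 b2 → voted n b1 → ¬ voted n b2)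
    (bA bC : β) (hconf : conflicting bA bC)
    (hA : ∀ n : Fin N, voted n bA)
    (S : Finset (Fin N)) (hS : S.card ≥ N - u - f_safe)
    (hSvote : ∀ n ∈ S, voted n bC) :
    False := by
  have hlt : B.card < S.card := by omega
  have hsub : ¬ S ⊆ B := fun h => absurd (Finset.card_le_card h) (by omega)
  obtain ⟨n, hnS, hnB⟩ := Finset.not_subset.mp hsub
  exact hcorrect n hnB bA bC hconf (hA n) (hSvote n hnS)
end

section
/- Forgoing liveness (π_live = 0), the minimum number of platforms required to tolerate π_safe compromised platforms while tolerating c crashes is π_safe + 1, achieved by placing 2c + 1 nodes in each of π_safe + 1 platforms; moreover, for any valid configuration, Π ≥ (2c+1)/ν + π_safe where ν is the size of the π_safe-th largest platform. -/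
/-- Forgoing liveness (`π_live = 0`), the minimum number of platforms required to
tolerate `πs` compromised platforms while tolerating `c` crashes is `πs + 1`:
(1) for any valid configuration (descending platform sizes whose total `N` satisfies
`N ≥ 2c + f_safe + 1` with `f_safe` the sum of the `πs` largest sizes), we have
`ν · (P - πs) ≥ 2c + 1` (i.e. `P ≥ (2c+1)/ν + πs`), where `ν` is the size of the
`πs`-th largest platform, and hence `P ≥ πs + 1`;
(2) placing `2c + 1` nodes in each of `πs + 1` platforms is a valid configuration. -/
theorem min_platforms_safety_only (c πs : ℕ) (hπs : 1 ≤ πs) :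
    (∀ (P : ℕ) (sizes : Fin P → ℕ),
      (∀ i j : Fin P, i ≤ j → sizes j ≤ sizes i) →
      (∀ i, 1 ≤ sizes i) →
      ∀ hP : πs ≤ P,
      (∑ i, sizes i) ≥
          2 * c + (∑ i ∈ Finset.univ.filter (fun i : Fin P => (i : ℕ) < πs), sizes i) + 1 →
      sizes ⟨πs - 1, by omega⟩ * (P - πs) ≥ 2 * c + 1 ∧ P ≥ πs + 1)
    ∧ (πs + 1) * (2 * c + 1) ≥ 2 * c + πs * (2 * c + 1) + 1 := by
  constructor
  · intro P sizes hdesc hpos hP htot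
    have hsplit := Finset.sum_filter_add_sum_filter_not Finset.univ
      (fun i : Fin P => (i : ℕ) < πs) sizes
    set S := Finset.univ.filter (fun i : Fin P => ¬ (i : ℕ) < πs) with hS
    have hrest : 2 * c + 1 ≤ ∑ i ∈ S, sizes i := by omega
    have hbound : ∀ i ∈ S, sizes i ≤ sizes ⟨πs - 1, by omega⟩ := by
      intro i hi
      simp only [hS, Finset.mem_filter] at hi
      exact hdesc _ _ (by simpa [Fin.le_def] using by omega)
    have hsum_le : ∑ i ∈ S, sizes i ≤ S.card * sizes ⟨πs - 1, by omega⟩ := by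
      calc ∑ i ∈ S, sizes i ≤ ∑ _i ∈ S, sizes ⟨πs - 1, by omega⟩ :=
            Finset.sum_le_sum hbound
        _ = S.card * sizes ⟨πs - 1, by omega⟩ := by
            rw [Finset.sum_const, smul_eq_mul]
    have hcard : S.card = P - πs := by
      have : S = Finset.univ.filter (fun i : Fin P => πs ≤ (i : ℕ)) := by
        apply Finset.filter_congr; intro i _; simp [not_lt]
      rw [this]
      have hPpos : πs < P ∨ πs = P := by omega
      rcases hPpos with h | h
      · have h2 : Finset.univ.filter (fun i : Fin P => πs ≤ (i : ℕ))
            = Finset.Ici (⟨πs, h⟩ : Fin P) := by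
          ext i
          simp [Finset.mem_Ici, Fin.le_def]
        rw [h2, Fin.card_Ici]
      · have h2 : Finset.univ.filter (fun i : Fin P => πs ≤ (i : ℕ)) = ∅ := by
          ext i
          simp only [Finset.mem_filter, Finset.mem_univ, true_and, Finset.notMem_empty,
            iff_false, not_le]
          omega
        rw [h2]
        simp
        omega
    rw [hcard] at hsum_le
    have hmain : sizes ⟨πs - 1, by omega⟩ * (P - πs) ≥ 2 * c + 1 := by
      calc 2 * c + 1 ≤ ∑ i ∈ S, sizes i := hrest
        _ ≤ (P - πs) * sizes ⟨πs - 1, by omega⟩ := hsum_le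
        _ = sizes ⟨πs - 1, by omega⟩ * (P - πs) := Nat.mul_comm _ _
    refine ⟨hmain, ?_⟩
    by_contra hcon
    have : P - πs = 0 := by omega
    rw [this, Nat.mul_zero] at hmain
    omega
  · nlinarith
end

section
/- Two quorums of size N - u each over N nodes with at most f_safe Byzantine nodes intersect in at least f_safe + 1 nodes whenever N ≥ 2u + f_safe + 1; hence at least one correct node belongs to both, so two auditQCs formed in the same view cannot certify conflicting batches (since a correct node votes for at most one branch per view). -/
/-- Two quorums of size `N - u` over `N` nodes with at most `f_safe` Byzantine nodes
intersect in at least `f_safe + 1` nodes whenever `N ≥ 2u + f_safe + 1`; hence a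
correct node belongs to both quorums, and since correct nodes vote for at most one of
two conflicting branches in a view, two auditQCs formed in the same view cannot
certify conflicting batches (branches are modeled as lists, extension as the prefix
relation). -/
theorem no_conflicting_auditQCs_same_view
    {β : Type} (N u f_safe : ℕ) (hN : N ≥ 2 * u + f_safe + 1)
    (B : Finset (Fin N)) (hB : B.card ≤ f_safe)
    (voted : Fin N → List β → Prop)
    (hcorrect : ∀ n, n ∉ B → ∀ l1 l2 : List β,
      voted n l1 → voted n l2 → l1 <+: l2 ∨ l2 <+: l1)
    (Q1 Q2 : Finset (Fin N)) (l1 l2 : List β)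
    (hQ1 : Q1.card ≥ N - u) (hQ2 : Q2.card ≥ N - u)
    (hv1 : ∀ n ∈ Q1, voted n l1) (hv2 : ∀ n ∈ Q2, voted n l2) :
    (Q1 ∩ Q2).card ≥ f_safe + 1 ∧ (l1 <+: l2 ∨ l2 <+: l1) := by
  have hu : Q1.card + Q2.card - (Q1 ∪ Q2).card ≤ (Q1 ∩ Q2).card := by
    have := Finset.card_union_add_card_inter Q1 Q2
    omega
  have hun : (Q1 ∪ Q2).card ≤ N := by
    simpa using (Finset.card_le_card (Finset.subset_univ (Q1 ∪ Q2)))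
  have hcard : (Q1 ∩ Q2).card ≥ f_safe + 1 := by omega
  refine ⟨hcard, ?_⟩
  have : ¬ (Q1 ∩ Q2 ⊆ B) := fun h => by
    have := Finset.card_le_card h; omega
  obtain ⟨n, hn, hnB⟩ := Finset.not_subset.mp this
  simp only [Finset.mem_inter] at hn
  exact hcorrect n hnB l1 l2 (hv1 n hn.1) (hv2 n hn.2)
end
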